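/- Let T be nonexpansive with v = x_⋆ − T x_⋆ the infimal displacement vector, and let x^k be the Halpern iteration with λ_k = 1/(k+1). Then ‖2(x^k − x^0)/k + v‖² ≤ (16/k²) ‖x^0 − x_⋆‖² for all k ≥ 1. -/

import Mathlib

open RealInnerProductSpace

def Nonexpansive {H : Type*} [NormedAddCommGroup H] (T : H → H) : Prop :=
  ∀ x y, ‖T x - T y‖ ≤ ‖x - y‖

section Aux
variable {H : Type*} [NormedAddCommGroup H] [InnerProductSpace ℝ H] {T : H → H}

lemma ohm_cocoercive (hT : Nonexpansive T) (x y : H) :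
    ‖(x - T x) - (y - T y)‖ ^ 2 ≤ 2 * ⟪(x - T x) - (y - T y), x - y⟫ := by
  have h := hT x y
  have h2 : ‖T x - T y‖ ^ 2 ≤ ‖x - y‖ ^ 2 := by
    have := norm_nonneg (T x - T y); nlinarith
  have hid : T x - T y = (x - y) - ((x - T x) - (y - T y)) := by abel
  rw [hid, norm_sub_sq_real] at h2
  rw [real_inner_comm]
  linarith

lemma ohm_mono (hT : Nonexpansive T) (x y : H) :
    0 ≤ ⟪(x - T x) - (y - T y), x - y⟫ := by
  have h := ohm_cocoercive hT x y
  nlinarith [sq_nonneg ‖(x - T x) - (y - T y)‖]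

set_option maxHeartbeats 1000000 in
lemma ohm_segment [CompleteSpace H] (hT : Nonexpansive T) (a b : H)
    {t : ℝ} (ht0 : 0 ≤ t) (ht1 : t ≤ 1) :
    (1 - t) • (a - T a) + t • (b - T b) ∈ closure (Set.range fun z => z - T z) := by
  haveI : Nonempty H := ⟨0⟩
  set c : H := (1 - t) • (a - T a) + t • (b - T b) with hc
  rw [Metric.mem_closure_iff]
  intro δ hδ
  set ub : H := (1 - t) • a + t • b with hub
  set B : ℝ := ‖ub‖ with hB
  set C : ℝ := max 0 (-((1 - t) * ⟪c - (a - T a), a⟫ + t * ⟪c - (b - T b), b⟫)) with hC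
  have hB0 : 0 ≤ B := norm_nonneg _
  have hC0 : 0 ≤ C := le_max_left _ _
  set ε : ℝ := min (δ / (4 * (B + 1))) (δ ^ 2 / (8 * (C + 1))) with hε
  have hε0 : 0 < ε := lt_min (by positivity) (by positivity)
  have hεB : ε * B ≤ δ / 4 := by
    have h1 : ε ≤ δ / (4 * (B + 1)) := min_le_left _ _
    have : ε * B ≤ (δ / (4 * (B + 1))) * B := by
      apply mul_le_mul_of_nonneg_right h1 hB0
    calc ε * B ≤ (δ / (4 * (B + 1))) * B := this
      _ ≤ δ / 4 := by
        rw [div_mul_eq_mul_div, div_le_div_iff₀ (by positivity) (by norm_num)]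
        nlinarith
  have hεC : ε * C ≤ δ ^ 2 / 8 := by
    have h1 : ε ≤ δ ^ 2 / (8 * (C + 1)) := min_le_right _ _
    have : ε * C ≤ (δ ^ 2 / (8 * (C + 1))) * C :=
      mul_le_mul_of_nonneg_right h1 hC0
    calc ε * C ≤ (δ ^ 2 / (8 * (C + 1))) * C := this
      _ ≤ δ ^ 2 / 8 := by
        rw [div_mul_eq_mul_div, div_le_div_iff₀ (by positivity) (by norm_num)]
        nlinarith
  -- contraction map
  have h1ε : (0:ℝ) < 1 + ε := by linarith
  set K : NNReal := ⟨(1 + ε)⁻¹, by positivity⟩ with hK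
  set F : H → H := fun u => (1 + ε)⁻¹ • (T u + c) with hF
  have hLip : LipschitzWith K F := by
    apply LipschitzWith.of_dist_le_mul
    intro u w
    simp only [hF, dist_eq_norm]
    have : (1 + ε)⁻¹ • (T u + c) - (1 + ε)⁻¹ • (T w + c) = (1 + ε)⁻¹ • (T u - T w) := by
      rw [← smul_sub]; congr 1; abel
    rw [this, norm_smul]
    have hKc : (K : ℝ) = (1 + ε)⁻¹ := rfl
    rw [hKc, Real.norm_eq_abs, abs_of_pos (by positivity)]
    exact mul_le_mul_of_nonneg_left (hT u w) (by positivity)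
  have hcontr : ContractingWith K F := by
    constructor
    · change (K : ℝ) < 1
      show (1 + ε)⁻¹ < 1
      rw [inv_lt_one_iff₀]
      right; linarith
    · exact hLip
  set z : H := ContractingWith.fixedPoint F hcontr with hz
  have hfix : F z = z := ContractingWith.fixedPoint_isFixedPt hcontr
  have hDz : z - T z = c - ε • z := by
    have h1 : T z + c = (1 + ε) • z := by
      have := congrArg (fun w => (1 + ε) • w) hfix
      simp only [hF] at this
      rw [smul_smul, mul_inv_cancel₀ (ne_of_gt h1ε), one_smul] at this
      exact this
    have : T z = (1 + ε) • z - c := by rw [← h1]; abel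
    rw [this]
    rw [add_smul, one_smul]
    abel
  -- monotonicity estimates
  have h1 := ohm_mono hT z a
  have h2 := ohm_mono hT z b
  rw [hDz] at h1 h2
  -- key estimate: ε * ‖z‖^2 ≤ C + ε * ⟪z, ub⟫
  have hkey : ε * ‖z‖ ^ 2 ≤ C + ε * ⟪z, ub⟫ := by
    have e1 : ⟪c - ε • z - (a - T a), z - a⟫
        = ⟪c - (a - T a), z⟫ - ε * ⟪z, z⟫ - ⟪c - (a - T a), a⟫ + ε * ⟪z, a⟫ := by
      simp only [inner_sub_left, inner_sub_right, real_inner_smul_left]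
      ring
    have e2 : ⟪c - ε • z - (b - T b), z - b⟫
        = ⟪c - (b - T b), z⟫ - ε * ⟪z, z⟫ - ⟪c - (b - T b), b⟫ + ε * ⟪z, b⟫ := by
      simp only [inner_sub_left, inner_sub_right, real_inner_smul_left]
      ring
    rw [e1] at h1; rw [e2] at h2
    have hcancel : (1 - t) * ⟪c - (a - T a), z⟫ + t * ⟪c - (b - T b), z⟫ = 0 := by
      have : (1 - t) • (c - (a - T a)) + t • (c - (b - T b)) = 0 := by
        rw [hc]; module
      have := congrArg (fun w => ⟪w, z⟫) this
      simpa [inner_add_left, real_inner_smul_left] using this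
    have hub' : ⟪z, ub⟫ = (1 - t) * ⟪z, a⟫ + t * ⟪z, b⟫ := by
      simp [hub, inner_add_right, real_inner_smul_right]
    have hC' : -((1 - t) * ⟪c - (a - T a), a⟫ + t * ⟪c - (b - T b), b⟫) ≤ C :=
      le_max_right _ _
    have hzz : ⟪z, z⟫ = ‖z‖ ^ 2 := real_inner_self_eq_norm_sq z
    have hm1 : 0 ≤ (1 - t) * (⟪c - (a - T a), z⟫ - ε * ⟪z, z⟫ - ⟪c - (a - T a), a⟫ + ε * ⟪z, a⟫) :=
      mul_nonneg (by linarith) h1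
    have hm2 : 0 ≤ t * (⟪c - (b - T b), z⟫ - ε * ⟪z, z⟫ - ⟪c - (b - T b), b⟫ + ε * ⟪z, b⟫) :=
      mul_nonneg ht0 h2
    rw [hub']
    nlinarith [hm1, hm2]
  -- conclude
  refine ⟨z - T z, ⟨z, rfl⟩, ?_⟩
  rw [dist_eq_norm, hDz]
  have : c - (c - ε • z) = ε • z := by abel
  rw [this, norm_smul, Real.norm_eq_abs, abs_of_pos hε0]
  set r : ℝ := ε * ‖z‖ with hr
  have hr0 : 0 ≤ r := by positivity
  have hCS : ⟪z, ub⟫ ≤ ‖z‖ * B := real_inner_le_norm z ub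
  have hrsq : r ^ 2 ≤ ε * C + r * (ε * B) := by
    have := mul_le_mul_of_nonneg_left hkey (le_of_lt hε0)
    have h2 : ε * (ε * ⟪z, ub⟫) ≤ ε * (ε * (‖z‖ * B)) := by
      apply mul_le_mul_of_nonneg_left _ (le_of_lt hε0)
      exact mul_le_mul_of_nonneg_left hCS (le_of_lt hε0)
    nlinarith
  have h3 : r * (ε * B) ≤ r * (δ / 4) := mul_le_mul_of_nonneg_left hεB hr0
  have h4 : r ^ 2 ≤ δ ^ 2 / 8 + r * (δ / 4) := by linarith
  by_contra hcon
  push_neg at hcon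
  have h5 : δ * δ ≤ r * r := mul_le_mul hcon hcon (le_of_lt hδ) hr0
  have h6 : δ * r ≤ r * r := mul_le_mul_of_nonneg_right hcon hr0
  have h7 : 0 < δ * δ := mul_pos hδ hδ
  nlinarith [h4, h5, h6, h7]


lemma ohm_sign [CompleteSpace H] (hT : Nonexpansive T) {v xs : H}
    (hvmin : ∀ w ∈ closure (Set.range fun z => z - T z), ‖v‖ ≤ ‖w‖)
    (hxs : xs - T xs = v) (x : H) :
    0 ≤ ⟪(x - T x) - v, v⟫ := by
  by_contra hI
  push_neg at hI
  set w : H := x - T x with hw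
  have hwv : w - v ≠ 0 := by
    intro h0
    rw [sub_eq_zero] at h0
    rw [h0] at hI
    simp at hI
  have hn : 0 < ‖w - v‖ ^ 2 := by
    have := norm_pos_iff.mpr hwv
    positivity
  set t : ℝ := min 1 (-⟪w - v, v⟫ / ‖w - v‖ ^ 2) with ht
  have ht0 : 0 < t := lt_min one_pos (div_pos (by linarith) hn)
  have ht1 : t ≤ 1 := min_le_left _ _
  have hmem := ohm_segment hT xs x (le_of_lt ht0) ht1
  rw [hxs] at hmem
  have hle := hvmin _ hmem
  have hid : (1 - t) • v + t • (x - T x) = v + t • (w - v) := by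
    rw [hw]; module
  rw [hid] at hle
  have hsq : ‖v‖ ^ 2 ≤ ‖v + t • (w - v)‖ ^ 2 := by
    nlinarith [norm_nonneg v, norm_nonneg (v + t • (w - v))]
  rw [norm_add_sq_real] at hsq
  have h1 : ⟪v, t • (w - v)⟫ = t * ⟪w - v, v⟫ := by
    rw [real_inner_smul_right, real_inner_comm]
  have h2 : ‖t • (w - v)‖ ^ 2 = t ^ 2 * ‖w - v‖ ^ 2 := by
    rw [norm_smul, Real.norm_eq_abs, mul_pow, sq_abs]
  rw [h1, h2] at hsq
  have htle : t * ‖w - v‖ ^ 2 ≤ -⟪w - v, v⟫ := by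
    have : t ≤ -⟪w - v, v⟫ / ‖w - v‖ ^ 2 := min_le_right _ _
    rw [le_div_iff₀ hn] at this
    linarith
  nlinarith [ht0, htle, hsq, hI]

lemma ohm_invariant [CompleteSpace H] (hT : Nonexpansive T) {v xs : H}
    (hvmin : ∀ w ∈ closure (Set.range fun z => z - T z), ‖v‖ ≤ ‖w‖)
    (hxs : xs - T xs = v)
    (x : ℕ → H)
    (hx : ∀ k : ℕ, x (k + 1) =
      (1 / ((k : ℝ) + 2)) • x 0 + (((k : ℝ) + 1) / ((k : ℝ) + 2)) • T (x k)) :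
    ∀ k : ℕ, ‖x k - xs + ((k : ℝ) / 2) • v‖ ≤ ‖x 0 - xs‖ := by
  intro k
  induction k with
  | zero => simp
  | succ k ih =>
    have hk2 : ((k : ℝ) + 2) ≠ 0 := by positivity
    have hTxs : T xs = xs - v := by rw [← hxs]; abel
    have key : x (k + 1) - xs + (((k : ℕ) + 1 : ℕ) / 2 : ℝ) • v
        = (1 / ((k : ℝ) + 2)) • (x 0 - xs)
          + (((k : ℝ) + 1) / ((k : ℝ) + 2)) • ((T (x k) - T xs) + ((k : ℝ) / 2) • v) := by
      push_cast
      rw [hx k, hTxs]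
      match_scalars <;> field_simp <;> ring
    have hm : ‖(T (x k) - T xs) + ((k : ℝ) / 2) • v‖ ≤ ‖x k - xs + ((k : ℝ) / 2) • v‖ := by
      set q : H := x k - xs + ((k : ℝ) / 2) • v with hq
      set e : H := (x k - T (x k)) - v with he
      have hme : (T (x k) - T xs) + ((k : ℝ) / 2) • v = q - e := by
        rw [hq, he, hTxs]; module
      rw [hme]
      have hcoco := ohm_cocoercive hT (x k) xs
      rw [hxs] at hcoco
      have hsgn := ohm_sign hT hvmin hxs (x k)
      have hexp : ‖q - e‖ ^ 2 = ‖q‖ ^ 2 - 2 * ⟪q, e⟫ + ‖e‖ ^ 2 := norm_sub_sq_real q e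
      have hqe : ⟪q, e⟫ = ⟪x k - xs, e⟫ + ((k : ℝ) / 2) * ⟪v, e⟫ := by
        rw [hq, inner_add_left, real_inner_smul_left]
      have hue : (1/2 : ℝ) * ‖e‖ ^ 2 ≤ ⟪x k - xs, e⟫ := by
        rw [real_inner_comm, he]
        linarith [hcoco]
      have hve : 0 ≤ ⟪v, e⟫ := by
        rw [real_inner_comm, he]
        exact hsgn
      have hk0 : (0:ℝ) ≤ (k : ℝ) / 2 := by positivity
      have hsq2 : ‖q - e‖ ^ 2 ≤ ‖q‖ ^ 2 := by
        nlinarith [mul_nonneg hk0 hve]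
      nlinarith [norm_nonneg (q - e), norm_nonneg q, hsq2]
    have hnn1 : (0:ℝ) ≤ 1 / ((k : ℝ) + 2) := by positivity
    have hnn2 : (0:ℝ) ≤ ((k : ℝ) + 1) / ((k : ℝ) + 2) := by positivity
    calc ‖x (k + 1) - xs + (((k : ℕ) + 1 : ℕ) / 2 : ℝ) • v‖
        ≤ (1 / ((k : ℝ) + 2)) * ‖x 0 - xs‖
          + (((k : ℝ) + 1) / ((k : ℝ) + 2)) * ‖(T (x k) - T xs) + ((k : ℝ) / 2) • v‖ := by
          rw [key]
          refine le_trans (norm_add_le _ _) ?_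
          rw [norm_smul, norm_smul, Real.norm_eq_abs, Real.norm_eq_abs,
            abs_of_nonneg hnn1, abs_of_nonneg hnn2]
      _ ≤ (1 / ((k : ℝ) + 2)) * ‖x 0 - xs‖
          + (((k : ℝ) + 1) / ((k : ℝ) + 2)) * ‖x 0 - xs‖ := by
          have h := le_trans hm ih
          nlinarith [h, hnn2]
      _ = ‖x 0 - xs‖ := by field_simp; ring

end Aux

/-- For the Halpern iteration with `λ_k = 1/(k+1)` (OHM), the normalized iterate
`2(x^k - x^0)/k` converges to `-v` at rate `16/k²`. -/
theorem ohm_normalized_iterate_rate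
    {H : Type*} [NormedAddCommGroup H] [InnerProductSpace ℝ H] [CompleteSpace H]
    (T : H → H) (hT : Nonexpansive T) (v xs : H)
    (hv : v ∈ closure (Set.range fun z => z - T z))
    (hvmin : ∀ w ∈ closure (Set.range fun z => z - T z), ‖v‖ ≤ ‖w‖)
    (hxs : xs - T xs = v)
    (x : ℕ → H)
    (hx : ∀ k : ℕ, x (k + 1) =
      (1 / ((k : ℝ) + 2)) • x 0 + (((k : ℝ) + 1) / ((k : ℝ) + 2)) • T (x k)) :
    ∀ k : ℕ, 1 ≤ k →
      ‖(2 / (k : ℝ)) • (x k - x 0) + v‖ ^ 2 ≤ (16 / (k : ℝ) ^ 2) * ‖x 0 - xs‖ ^ 2 := by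
  intro k hk
  have hk0 : (0:ℝ) < (k : ℝ) := by exact_mod_cast Nat.lt_of_lt_of_le Nat.zero_lt_one hk
  have hkne : (k : ℝ) ≠ 0 := ne_of_gt hk0
  have hq := ohm_invariant hT hvmin hxs x hx k
  have hid : (2 / (k : ℝ)) • (x k - x 0) + v
      = (2 / (k : ℝ)) • ((x k - xs + ((k : ℝ) / 2) • v) - (x 0 - xs)) := by
    match_scalars <;> field_simp <;> ring
  rw [hid]
  set R : ℝ := ‖x 0 - xs‖ with hR
  have hR0 : 0 ≤ R := norm_nonneg _
  have h1 : ‖(2 / (k : ℝ)) • ((x k - xs + ((k : ℝ) / 2) • v) - (x 0 - xs))‖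
      ≤ (2 / (k : ℝ)) * (2 * R) := by
    rw [norm_smul, Real.norm_eq_abs, abs_of_nonneg (by positivity)]
    have h2 : ‖(x k - xs + ((k : ℝ) / 2) • v) - (x 0 - xs)‖ ≤ 2 * R := by
      refine le_trans (norm_sub_le _ _) ?_
      linarith [hq]
    exact mul_le_mul_of_nonneg_left h2 (by positivity)
  have hn0 : 0 ≤ ‖(2 / (k : ℝ)) • ((x k - xs + ((k : ℝ) / 2) • v) - (x 0 - xs))‖ :=
    norm_nonneg _
  have hsq : ‖(2 / (k : ℝ)) • ((x k - xs + ((k : ℝ) / 2) • v) - (x 0 - xs))‖ ^ 2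
      ≤ ((2 / (k : ℝ)) * (2 * R)) ^ 2 := by
    nlinarith [h1, hn0]
  calc ‖(2 / (k : ℝ)) • ((x k - xs + ((k : ℝ) / 2) • v) - (x 0 - xs))‖ ^ 2
      ≤ ((2 / (k : ℝ)) * (2 * R)) ^ 2 := hsq
    _ = (16 / (k : ℝ) ^ 2) * R ^ 2 := by field_simp; ring
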